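/- arXiv:2605.00429 — 5 statements merged into one kernel-verified Lean document; each statement's English description precedes it below -/
import Mathlib

section
/- Let S be a nonempty finite set of points in ℝ³, let P = convexHull ℝ S be the convex polyhedron they span, and let v be any point of ℝ³. Then the continuous union of closed balls centered at all points of P, each with radius equal to its distance to v, equals the finite union of closed balls centered at the points of S: ⋃_{x ∈ P} closedBall(x, dist x v) = ⋃_{u ∈ S} closedBall(u, dist u v). -/
open Metric

lemma convex_dist_lt_dist {E : Type*} [NormedAddCommGroup E] [InnerProductSpace ℝ E]
    (v p : E) : Convex ℝ {y : E | dist y v < dist y p} := by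
  have hlin : IsLinearMap ℝ (fun y : E => (2 : ℝ) * inner ℝ (p - v) y) := by
    constructor
    · intro a b; rw [inner_add_right]; ring
    · intro c a; rw [real_inner_smul_right]; simp [smul_eq_mul]; ring
  have h := convex_halfSpace_lt hlin (‖p‖ ^ 2 - ‖v‖ ^ 2)
  convert h using 1
  ext y
  simp only [Set.mem_setOf_eq]
  rw [dist_eq_norm, dist_eq_norm]
  constructor
  · intro hyp
    have h1 : ‖y - v‖ ^ 2 < ‖y - p‖ ^ 2 := by
      apply pow_lt_pow_left₀ hyp (norm_nonneg _) (by norm_num)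
    rw [@norm_sub_sq_real, @norm_sub_sq_real] at h1
    have h2 : inner ℝ (p - v) y = (inner ℝ p y : ℝ) - inner ℝ v y := inner_sub_left p v y
    rw [h2]
    have c1 : (inner ℝ p y : ℝ) = inner ℝ y p := real_inner_comm y p
    have c2 : (inner ℝ v y : ℝ) = inner ℝ y v := real_inner_comm y v
    linarith
  · intro hyp
    have h2 : inner ℝ (p - v) y = (inner ℝ p y : ℝ) - inner ℝ v y := inner_sub_left p v y
    rw [h2] at hyp
    have c1 : (inner ℝ p y : ℝ) = inner ℝ y p := real_inner_comm y p
    have c2 : (inner ℝ v y : ℝ) = inner ℝ y v := real_inner_comm y v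
    have h1 : ‖y - v‖ ^ 2 < ‖y - p‖ ^ 2 := by
      rw [@norm_sub_sq_real, @norm_sub_sq_real]
      linarith
    nlinarith [norm_nonneg (y - v), norm_nonneg (y - p)]

/-- **Vertex Sphere Union Theorem.** For a nonempty finite set `S` of points in `ℝ³`
spanning the convex polyhedron `P = convexHull ℝ S`, and any point `v`, the union of
closed balls centered at all points `x ∈ P` with radius `dist x v` equals the finite
union of closed balls centered at the points of `S`. -/
theorem vertex_sphere_union_closed
    (S : Finset (EuclideanSpace ℝ (Fin 3))) (hS : S.Nonempty)
    (v : EuclideanSpace ℝ (Fin 3)) :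
    (⋃ x ∈ convexHull ℝ (S : Set (EuclideanSpace ℝ (Fin 3))), closedBall x (dist x v)) =
      ⋃ u ∈ (S : Set (EuclideanSpace ℝ (Fin 3))), closedBall u (dist u v) := by
  apply Set.Subset.antisymm
  · intro p hp
    simp only [Set.mem_iUnion, exists_prop] at hp ⊢
    obtain ⟨x, hx, hpx⟩ := hp
    by_contra h
    push_neg at h
    have hsub : (S : Set (EuclideanSpace ℝ (Fin 3))) ⊆ {y | dist y v < dist y p} := by
      intro u hu
      have h1 := h u hu
      rw [mem_closedBall, not_le] at h1
      simpa [Set.mem_setOf_eq, dist_comm p u] using h1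
    have hx' := convexHull_min hsub (convex_dist_lt_dist v p) hx
    rw [mem_closedBall] at hpx
    rw [Set.mem_setOf_eq, dist_comm x p] at hx'
    exact absurd hpx (not_le.2 hx')
  · intro p hp
    simp only [Set.mem_iUnion, exists_prop] at hp ⊢
    obtain ⟨u, hu, hpu⟩ := hp
    exact ⟨u, subset_convexHull ℝ _ hu, hpu⟩
end

section
/- Let S be a nonempty finite set of points in ℝ³ and let v, p be points of ℝ³. If there exists x ∈ convexHull ℝ S with dist p x ≤ dist x v, then there exists a vertex u ∈ S with dist p u ≤ dist u v. -/
open Metric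

private lemma dist_iff_affine (v p u : EuclideanSpace ℝ (Fin 3)) :
    dist p u ≤ dist u v ↔ ‖p‖ ^ 2 - ‖v‖ ^ 2 + 2 * inner ℝ u (v - p) ≤ (0 : ℝ) := by
  rw [dist_eq_norm, dist_eq_norm, ← Real.sqrt_sq (norm_nonneg (p - u)),
    ← Real.sqrt_sq (norm_nonneg (u - v)), Real.sqrt_le_sqrt_iff (by positivity)]
  have h1 : ‖p - u‖ ^ 2 = ‖p‖ ^ 2 - 2 * inner ℝ p u + ‖u‖ ^ 2 := norm_sub_sq_real p u
  have h2 : ‖u - v‖ ^ 2 = ‖u‖ ^ 2 - 2 * inner ℝ u v + ‖v‖ ^ 2 := norm_sub_sq_real u v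
  have h3 : (inner ℝ u (v - p) : ℝ) = inner ℝ u v - inner ℝ u p := inner_sub_right u v p
  have h4 : (inner ℝ p u : ℝ) = inner ℝ u p := (real_inner_comm p u).symm
  rw [h1, h2, h3, h4]
  constructor <;> intro <;> linarith

/-- The nontrivial inclusion of the Vertex Sphere Union Theorem: if some point `x` of the
convex hull of a nonempty finite set `S` satisfies `dist p x ≤ dist x v`, then some vertex
`u ∈ S` satisfies `dist p u ≤ dist u v`. -/
theorem exists_vertex_of_mem_convexHull_ball
    (S : Finset (EuclideanSpace ℝ (Fin 3))) (hS : S.Nonempty)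
    (v p : EuclideanSpace ℝ (Fin 3))
    (h : ∃ x ∈ convexHull ℝ (S : Set (EuclideanSpace ℝ (Fin 3))), dist p x ≤ dist x v) :
    ∃ u ∈ S, dist p u ≤ dist u v := by
  obtain ⟨x, hx, hpx⟩ := h
  rw [Finset.convexHull_eq] at hx
  obtain ⟨w, hw0, hw1, hxc⟩ := hx
  by_contra hcon
  push_neg at hcon
  -- f u := ‖p‖^2 - ‖v‖^2 + 2 * ⟪u, v - p⟫ is positive at each vertex
  set c : ℝ := ‖p‖ ^ 2 - ‖v‖ ^ 2 with hc
  have hvert : ∀ u ∈ S, 0 < c + 2 * inner ℝ u (v - p) := by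
    intro u hu
    have := hcon u hu
    have := (not_iff_not.mpr (dist_iff_affine v p u)).mp (not_le.mpr this)
    linarith [not_le.mp this]
  have hxle : c + 2 * (inner ℝ x (v - p) : ℝ) ≤ 0 := (dist_iff_affine v p x).mp hpx
  -- compute inner ℝ x (v - p) as weighted sum
  have hxval : (inner ℝ x (v - p) : ℝ) = ∑ u ∈ S, w u * inner ℝ u (v - p) := by
    rw [← hxc, Finset.centerMass, hw1, inv_one, one_smul, sum_inner]
    simp only [real_inner_smul_left]
    simp [PiLp.inner_apply, Finset.mul_sum, mul_assoc]
  have hsum : c + 2 * (inner ℝ x (v - p) : ℝ)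
      = ∑ u ∈ S, w u * (c + 2 * inner ℝ u (v - p)) := by
    rw [hxval]
    rw [Finset.sum_congr rfl (fun u _ => by ring :
      ∀ u ∈ S, w u * (c + 2 * inner ℝ u (v - p)) = w u * c + 2 * (w u * inner ℝ u (v - p)))]
    rw [Finset.sum_add_distrib, ← Finset.sum_mul, hw1, ← Finset.mul_sum]
    ring
  have hpos : 0 < ∑ u ∈ S, w u * (c + 2 * (inner ℝ u (v - p) : ℝ)) := by
    obtain ⟨j, hj, hwj⟩ : ∃ j ∈ S, 0 < w j := by
      by_contra hc2
      push_neg at hc2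
      have : ∑ u ∈ S, w u ≤ 0 := Finset.sum_nonpos fun u hu => hc2 u hu
      linarith [hw1]
    apply Finset.sum_pos' (fun u hu => mul_nonneg (hw0 u hu) (le_of_lt (hvert u hu)))
    exact ⟨j, hj, mul_pos hwj (hvert j hj)⟩
  linarith [hsum ▸ hxle]
end

section
/- Let S be a nonempty finite set of points in ℝ³, let P = convexHull ℝ S, and let v be any point of ℝ³. Then the union of open balls centered at all points of P, each with radius equal to its distance to v, equals the finite union of open balls centered at the points of S: ⋃_{x ∈ P} ball(x, dist x v) = ⋃_{u ∈ S} ball(u, dist u v). -/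
open Metric RealInnerProductSpace

lemma dist_aux (p v x : EuclideanSpace ℝ (Fin 3)) :
    dist x v ≤ dist p x ↔ (inner ℝ x (p - v) : ℝ) ≤ (‖p‖ ^ 2 - ‖v‖ ^ 2) / 2 := by
  have h1 : ‖x - v‖ ^ 2 = ‖x‖ ^ 2 - 2 * (inner ℝ x (v) : ℝ) + ‖v‖ ^ 2 := norm_sub_sq_real x v
  have h2 : ‖p - x‖ ^ 2 = ‖p‖ ^ 2 - 2 * (inner ℝ p (x) : ℝ) + ‖x‖ ^ 2 := norm_sub_sq_real p x
  have h3 : (inner ℝ x (p - v) : ℝ) = (inner ℝ x (p) : ℝ) - (inner ℝ x (v) : ℝ) := inner_sub_right x p v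
  have h4 : (inner ℝ p (x) : ℝ) = (inner ℝ x (p) : ℝ) := real_inner_comm x p
  rw [dist_eq_norm, dist_eq_norm]
  constructor
  · intro h
    nlinarith [norm_nonneg (x - v), norm_nonneg (p - x)]
  · intro h
    nlinarith [norm_nonneg (x - v), norm_nonneg (p - x)]

/-- Open-ball variant of the Vertex Sphere Union Theorem. -/
theorem vertex_sphere_union_open
    (S : Finset (EuclideanSpace ℝ (Fin 3))) (hS : S.Nonempty)
    (v : EuclideanSpace ℝ (Fin 3)) :
    (⋃ x ∈ convexHull ℝ (S : Set (EuclideanSpace ℝ (Fin 3))), ball x (dist x v)) =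
      ⋃ u ∈ (S : Set (EuclideanSpace ℝ (Fin 3))), ball u (dist u v) := by
  ext p
  simp only [Set.mem_iUnion, mem_ball, exists_prop]
  constructor
  · rintro ⟨x, hx, hpx⟩
    by_contra h
    push_neg at h
    have hlin : IsLinearMap ℝ (fun y : EuclideanSpace ℝ (Fin 3) => (inner ℝ y (p - v) : ℝ)) :=
      ⟨fun a b => inner_add_left a b _, fun c a => real_inner_smul_left a _ c⟩
    have hconv : Convex ℝ {y : EuclideanSpace ℝ (Fin 3) |
        (inner ℝ y (p - v) : ℝ) ≤ (‖p‖ ^ 2 - ‖v‖ ^ 2) / 2} := convex_halfSpace_le hlin _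
    have hsub : (S : Set (EuclideanSpace ℝ (Fin 3))) ⊆ {y : EuclideanSpace ℝ (Fin 3) |
        (inner ℝ y (p - v) : ℝ) ≤ (‖p‖ ^ 2 - ‖v‖ ^ 2) / 2} := by
      intro u hu
      exact (dist_aux p v u).mp (h u hu)
    have := convexHull_min hsub hconv hx
    exact absurd ((dist_aux p v x).mpr this) (not_le.mpr hpx)
  · rintro ⟨u, hu, hpu⟩
    exact ⟨u, subset_convexHull ℝ _ hu, hpu⟩
end

section
/- Let S be a nonempty finite set of points in ℝ³, let s and w be points of ℝ³, and set r = max_{u ∈ S} (dist s u + dist u w). Then for every x in convexHull ℝ S, the closed ball closedBall(x, dist x w) is contained in closedBall(s, r); equivalently, ⋃_{x ∈ convexHull ℝ S} closedBall(x, dist x w) ⊆ closedBall(s, r). -/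
open Metric

/-- Correctness of the conservative sphere over the whole convex cell: with
`r = max_{u ∈ S} (dist s u + dist u w)`, every closed ball `B(x, dist x w)` with
`x ∈ convexHull ℝ S` is contained in `B(s, r)`. -/
theorem convexHull_balls_subset_conservative_ball
    (S : Finset (EuclideanSpace ℝ (Fin 3))) (hS : S.Nonempty)
    (s w : EuclideanSpace ℝ (Fin 3)) :
    ∀ x ∈ convexHull ℝ (S : Set (EuclideanSpace ℝ (Fin 3))),
      closedBall x (dist x w) ⊆
        closedBall s (S.sup' hS fun u => dist s u + dist u w) := by
  intro x hx p hp
  have hconv : ConvexOn ℝ (convexHull ℝ (S : Set (EuclideanSpace ℝ (Fin 3))))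
      (fun u => dist s u + dist u w) := by
    have h1 : ConvexOn ℝ (convexHull ℝ (S : Set (EuclideanSpace ℝ (Fin 3))))
        (fun u => dist s u) := by
      simpa [dist_comm] using convexOn_dist s (convex_convexHull ℝ (S : Set _))
    exact h1.add (convexOn_dist w (convex_convexHull ℝ _))
  obtain ⟨y, hy, hxy⟩ := hconv.exists_ge_of_mem_convexHull (subset_convexHull ℝ _) hx
  have hsup : dist s y + dist y w ≤ S.sup' hS fun u => dist s u + dist u w :=
    Finset.le_sup' (fun u => dist s u + dist u w) (by exact_mod_cast hy)
  have hpx : dist p x ≤ dist x w := mem_closedBall.mp hp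
  have : dist p s ≤ dist p x + dist x s := dist_triangle p x s
  rw [mem_closedBall]
  calc dist p s ≤ dist p x + dist x s := dist_triangle p x s
    _ ≤ dist x w + dist x s := by linarith
    _ = dist s x + dist x w := by rw [dist_comm x s]; ring
    _ ≤ dist s y + dist y w := hxy
    _ ≤ _ := hsup
end

section
/- Let S be a nonempty finite set of points in ℝ³, let v be a point of ℝ³, and let F be a nonempty subset of ℝ³ (e.g. a mesh triangle). Then there exists q ∈ convexHull ℝ S with infDist(q, F) < dist q v if and only if there exists a vertex u ∈ S with infDist(u, F) < dist u v. -/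
open Metric

open scoped RealInnerProductSpace

private lemma dist_lt_dist_iff_inner (x z v : EuclideanSpace ℝ (Fin 3)) :
    dist x z < dist x v ↔ 2 * ⟪x, v - z⟫ < ‖v‖ ^ 2 - ‖z‖ ^ 2 := by
  rw [dist_eq_norm, dist_eq_norm, ← pow_lt_pow_iff_left₀ (norm_nonneg _) (norm_nonneg _)
    (two_ne_zero), norm_sub_sq_real, norm_sub_sq_real, inner_sub_right]
  constructor <;> intro h <;> nlinarith

/-- Reduction of interference detection over a convex cell to its corners: a nonempty set
`F` provides a strictly shorter distance than the site `v` for some point of the convex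
hull of `S` iff it does so for some vertex `u ∈ S`. -/
theorem interference_iff_exists_vertex
    (S : Finset (EuclideanSpace ℝ (Fin 3))) (hS : S.Nonempty)
    (v : EuclideanSpace ℝ (Fin 3))
    (F : Set (EuclideanSpace ℝ (Fin 3))) (hF : F.Nonempty) :
    (∃ q ∈ convexHull ℝ (S : Set (EuclideanSpace ℝ (Fin 3))),
        Metric.infDist q F < dist q v) ↔
      ∃ u ∈ S, Metric.infDist u F < dist u v := by
  constructor
  · rintro ⟨q, hq, hlt⟩
    obtain ⟨z, hzF, hz⟩ := (Metric.infDist_lt_iff hF).mp hlt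
    -- pick vertex minimizing the linear functional ⟪·, v - z⟫
    obtain ⟨u, huS, humin⟩ := S.exists_min_image (fun x => ⟪x, v - z⟫) hS
    have hconv : Convex ℝ {x : EuclideanSpace ℝ (Fin 3) | ⟪u, v - z⟫ ≤ ⟪x, v - z⟫} :=
      convex_halfSpace_ge ⟨fun a b => inner_add_left a b _, fun c x => real_inner_smul_left x _ c⟩ _
    have hsub : (S : Set (EuclideanSpace ℝ (Fin 3))) ⊆
        {x | ⟪u, v - z⟫ ≤ ⟪x, v - z⟫} := fun x hx => humin x hx
    have hq' : ⟪u, v - z⟫ ≤ ⟪q, v - z⟫ :=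
      (convexHull_min hsub hconv) hq
    have huz : dist u z < dist u v := by
      rw [dist_lt_dist_iff_inner]
      have := (dist_lt_dist_iff_inner q z v).mp hz
      linarith
    exact ⟨u, huS, lt_of_le_of_lt (Metric.infDist_le_dist_of_mem hzF) huz⟩
  · rintro ⟨u, huS, hu⟩
    exact ⟨u, subset_convexHull ℝ _ huS, hu⟩
end
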